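/- For ψ ∈ {1, −1}, ∫_ℝ e^{−rT}·1{ψ·(S_T(z) − K) > 0}·φ(z) dz = e^{−rT}·Φ(ψd₂). -/

import Mathlib

open MeasureTheory

/-- The standard normal density. -/
noncomputable def gaussPDF (z : ℝ) : ℝ := (Real.sqrt (2 * Real.pi))⁻¹ * Real.exp (-z ^ 2 / 2)

/-- The standard normal cumulative distribution function. -/
noncomputable def gaussCDF (x : ℝ) : ℝ := ∫ z in Set.Iic x, gaussPDF z

lemma gaussCDF_eq_Ioi (x : ℝ) : (∫ z in Set.Ioi (-x), gaussPDF z) = gaussCDF x := by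
  have h := integral_comp_neg_Iic x gaussPDF
  rw [gaussCDF, ← h]
  congr 1
  ext z
  simp [gaussPDF, neg_pow]

/-- The conditional price of a cash-or-nothing option (`ψ = 1` call, `ψ = -1` put). -/
theorem stmt_10 (S₀ K T σ : ℝ) (r q : ℝ) (hS : 0 < S₀) (hK : 0 < K) (hT : 0 < T)
    (hσ : 0 < σ) (ψ : ℝ) (hψ : ψ = 1 ∨ ψ = -1) :
    (∫ z : ℝ, Real.exp (-r * T)
        * (if 0 < ψ * (S₀ * Real.exp ((r - q - σ ^ 2 / 2) * T + σ * Real.sqrt T * z) - K)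
            then (1 : ℝ) else 0)
        * gaussPDF z)
      = Real.exp (-r * T)
          * gaussCDF (ψ * ((Real.log (S₀ / K) + (r - q + σ ^ 2 / 2) * T) / (σ * Real.sqrt T)
              - σ * Real.sqrt T)) := by
  set b : ℝ := σ * Real.sqrt T with hb
  have hbpos : 0 < b := mul_pos hσ (Real.sqrt_pos.mpr hT)
  set d : ℝ := (Real.log (S₀ / K) + (r - q + σ ^ 2 / 2) * T) / b - b with hd
  set A : ℝ := (r - q - σ ^ 2 / 2) * T with hA
  have hbsq : b ^ 2 = σ ^ 2 * T := by
    rw [hb, mul_pow, Real.sq_sqrt hT.le]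
  have hlogK : Real.log (K / S₀) = A - d * b := by
    have hlog : Real.log (K / S₀) = -Real.log (S₀ / K) := by
      rw [Real.log_div hK.ne' hS.ne', Real.log_div hS.ne' hK.ne']; ring
    have hd' : d * b = Real.log (S₀ / K) + (r - q + σ ^ 2 / 2) * T - b ^ 2 := by
      rw [hd]; field_simp
    rw [hlog, hd', hbsq, hA]; ring
  have hlin : ∀ z : ℝ, A + b * z - Real.log (K / S₀) = (z + d) * b := by
    intro z; rw [hlogK]; ring
  have hkey : ∀ z : ℝ, (0 < S₀ * Real.exp (A + b * z) - K) ↔ -d < z := by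
    intro z
    rw [sub_pos, ← div_lt_iff₀' hS, ← Real.exp_log (div_pos hK hS), Real.exp_lt_exp]
    have h1 : (0 < (z + d) * b) ↔ (0 < z + d) := mul_pos_iff_of_pos_right hbpos
    constructor
    · intro h; have := h1.mp (by rw [← hlin z]; linarith); linarith
    · intro h; have := h1.mpr (by linarith); rw [← hlin z] at this; linarith
  have hkey2 : ∀ z : ℝ, (S₀ * Real.exp (A + b * z) - K < 0) ↔ z < -d := by
    intro z
    rw [sub_neg, ← lt_div_iff₀' hS, ← Real.exp_log (div_pos hK hS), Real.exp_lt_exp]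
    have h1 : (0 < (-(z + d)) * b) ↔ (0 < -(z + d)) := mul_pos_iff_of_pos_right hbpos
    constructor
    · intro h; have := h1.mp (by rw [neg_mul, ← hlin z]; linarith); linarith
    · intro h; have := h1.mpr (by linarith); rw [neg_mul, ← hlin z] at this; linarith
  rcases hψ with hψ | hψ
  · subst hψ
    simp only [one_mul]
    have heq : ∀ z : ℝ, (if 0 < S₀ * Real.exp (A + b * z) - K then (1:ℝ) else 0) * gaussPDF z
        = Set.indicator (Set.Ioi (-d)) gaussPDF z := by
      intro z
      by_cases h : z ∈ Set.Ioi (-d)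
      · rw [Set.indicator_of_mem h, if_pos ((hkey z).mpr h), one_mul]
      · rw [Set.indicator_of_notMem h, if_neg (fun hh => h ((hkey z).mp hh)), zero_mul]
    calc (∫ z : ℝ, Real.exp (-r * T)
        * (if 0 < S₀ * Real.exp (A + b * z) - K then (1:ℝ) else 0) * gaussPDF z)
        = Real.exp (-r * T) * ∫ z : ℝ, Set.indicator (Set.Ioi (-d)) gaussPDF z := by
          rw [← integral_const_mul]
          congr 1; ext z; rw [mul_assoc, heq z]
      _ = Real.exp (-r * T) * ∫ z in Set.Ioi (-d), gaussPDF z := by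
          rw [integral_indicator measurableSet_Ioi]
      _ = Real.exp (-r * T) * gaussCDF d := by rw [gaussCDF_eq_Ioi]
  · subst hψ
    have heq : ∀ z : ℝ, (if 0 < (-1) * (S₀ * Real.exp (A + b * z) - K) then (1:ℝ) else 0)
        * gaussPDF z = Set.indicator (Set.Iio (-d)) gaussPDF z := by
      intro z
      have h2 : (0 < (-1) * (S₀ * Real.exp (A + b * z) - K)) ↔ z ∈ Set.Iio (-d) := by
        rw [neg_one_mul, Set.mem_Iio, ← hkey2 z]
        constructor
        · intro h; linarith
        · intro h; linarith
      by_cases h : z ∈ Set.Iio (-d)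
      · rw [Set.indicator_of_mem h, if_pos (h2.mpr h), one_mul]
      · rw [Set.indicator_of_notMem h, if_neg (fun hh => h (h2.mp hh)), zero_mul]
    calc (∫ z : ℝ, Real.exp (-r * T)
        * (if 0 < (-1) * (S₀ * Real.exp (A + b * z) - K) then (1:ℝ) else 0) * gaussPDF z)
        = Real.exp (-r * T) * ∫ z : ℝ, Set.indicator (Set.Iio (-d)) gaussPDF z := by
          rw [← integral_const_mul]
          congr 1; ext z; rw [mul_assoc, heq z]
      _ = Real.exp (-r * T) * ∫ z in Set.Iio (-d), gaussPDF z := by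
          rw [integral_indicator measurableSet_Iio]
      _ = Real.exp (-r * T) * gaussCDF (-d) := by
          rw [gaussCDF, ← integral_Iic_eq_integral_Iio]
      _ = Real.exp (-r * T) * gaussCDF ((-1) * d) := by rw [neg_one_mul]
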